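/- arXiv:1312.7368 — 3 statements merged into one kernel-verified Lean document; each statement's English description precedes it below -/
import Mathlib

section
/- Any category with length function is acyclic: if (C, ℓ, B) is a category with length function, then every endomorphism in C is an identity morphism (i.e., for every object x, every morphism f : x → x equals the identity of x), and for any two distinct objects x ≠ y, the sets Hom(x, y) and Hom(y, x) are not both nonempty. -/
open CategoryTheory

/-- Any category with length function is acyclic: every endomorphism is
an identity, and for distinct objects `x ≠ y` the hom-sets `Hom(x,y)` and `Hom(y,x)` are
not both nonempty. -/
theorem category_with_length_function_is_acyclic {C : Type*} [Category C]
    (ℓ : ∀ {x y : C}, (x ⟶ y) → ℕ)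
    (hcomp : ∀ {x y z : C} (u : x ⟶ y) (v : y ⟶ z), ℓ (u ≫ v) = ℓ v + ℓ u)
    (hid : ∀ {x y : C} (u : x ⟶ y), ℓ u = 0 ↔ ∃ h : x = y, u = eqToHom h)
    (B : Set C)
    (hB1 : ∀ x : C, ∃ b ∈ B, Nonempty (b ⟶ x))
    (hB2 : ∀ {x b b' : C}, b ∈ B → b' ∈ B → ∀ (u : b ⟶ x) (u' : b' ⟶ x), ℓ u = ℓ u') :
    (∀ (x : C) (f : x ⟶ x), f = 𝟙 x) ∧
    (∀ x y : C, x ≠ y → ¬(Nonempty (x ⟶ y) ∧ Nonempty (y ⟶ x))) := by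
  constructor
  · intro x f
    obtain ⟨b, hb, ⟨u⟩⟩ := hB1 x
    have h1 : ℓ (u ≫ f) = ℓ u := hB2 hb hb (u ≫ f) u
    rw [hcomp] at h1
    have hf0 : ℓ f = 0 := by omega
    obtain ⟨h, hf⟩ := (hid f).mp hf0
    simpa using hf
  · rintro x y hxy ⟨⟨g⟩, ⟨h⟩⟩
    obtain ⟨b, hb, ⟨u⟩⟩ := hB1 x
    have h1 : ℓ (u ≫ g ≫ h) = ℓ u := hB2 hb hb (u ≫ g ≫ h) u
    rw [hcomp, hcomp] at h1
    have hg0 : ℓ g = 0 := by omega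
    obtain ⟨heq, _⟩ := (hid g).mp hg0
    exact hxy heq
end

section
/- If f₁ : X₁ → Y₁ and f₂ : X₂ → Y₂ are continuous surjective closed maps between metrizable topological spaces, then the product map f₁ × f₂ : X₁ × X₂ → Y₁ × Y₂, (x₁, x₂) ↦ (f₁(x₁), f₂(x₂)), is a quotient map. -/
open Filter Topology Set

/-- A sequence with no cluster point in a first countable T1 space has closed range. -/
lemma isClosed_range_of_no_clusterPt {X : Type*} [TopologicalSpace X]
    [FirstCountableTopology X] [T1Space X] {p : ℕ → X}
    (h : ∀ x, ¬ MapClusterPt x atTop p) : IsClosed (Set.range p) := by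
  refine isClosed_of_closure_subset fun z hz => ?_
  by_contra hzr
  refine h z (((nhds_basis_opens z).mapClusterPt_iff_frequently).2 fun s hs => ?_)
  by_contra hfreq
  rw [not_frequently] at hfreq
  obtain ⟨N, hN⟩ := (eventually_atTop).1 hfreq
  have hsub : Set.range p ∩ s ⊆ p '' (Set.Iio N) := by
    rintro x ⟨⟨n, rfl⟩, hxs⟩
    exact ⟨n, by by_contra hn; exact hN n (le_of_not_gt hn) hxs, rfl⟩
  have hz' : z ∈ closure (Set.range p ∩ s) := hs.2.closure_inter ⟨hz, hs.1⟩
  have hfin : (p '' (Set.Iio N)).Finite := (Set.finite_Iio N).image p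
  have : z ∈ p '' (Set.Iio N) := by
    have := closure_mono hsub hz'
    rwa [hfin.isClosed.closure_eq] at this
  exact hzr (Set.image_subset_range _ _ this)

/-- Key lemma: for a closed continuous surjection from a metrizable space to a T2 space,
any convergent sequence in the target admits a convergent lift along a subsequence. -/
lemma exists_subseq_lift {X Y : Type*} [TopologicalSpace X] [TopologicalSpace Y]
    [TopologicalSpace.MetrizableSpace X] [T2Space Y] {f : X → Y}
    (hc : Continuous f) (hs : Function.Surjective f) (hcl : IsClosedMap f)
    {a : Y} {u : ℕ → Y} (hu : Tendsto u atTop (𝓝 a)) :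
    ∃ x, f x = a ∧ ∃ φ : ℕ → ℕ, StrictMono φ ∧
      ∃ q : ℕ → X, (∀ k, f (q k) = u (φ k)) ∧ Tendsto q atTop (𝓝 x) := by
  by_cases hinf : {n | u n = a}.Infinite
  · obtain ⟨x, hx⟩ := hs a
    have hfreq : ∃ᶠ n in atTop, u n = a := Nat.frequently_atTop_iff_infinite.2 hinf
    obtain ⟨φ, hφ, hφa⟩ := Filter.extraction_of_frequently_atTop hfreq
    exact ⟨x, hx, φ, hφ, fun _ => x, fun k => by rw [hx, hφa], tendsto_const_nhds⟩
  · rw [Set.not_infinite] at hinf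
    -- eventually `u n ≠ a`
    have hev : ∀ᶠ n in atTop, u n ≠ a := by
      rcases hinf.bddAbove with ⟨N, hN⟩
      exact eventually_atTop.2 ⟨N + 1, fun n hn hna => by
        have := hN hna; omega⟩
    obtain ⟨N, hN⟩ := eventually_atTop.1 hev
    choose p hp using fun n => hs (u (n + N))
    by_cases H : ∃ x, MapClusterPt x atTop p
    · obtain ⟨x, hx⟩ := H
      have hfx : MapClusterPt (f x) atTop (f ∘ p) := hx.continuousAt_comp hc.continuousAt
      have hfp : (f ∘ p) = fun n => u (n + N) := funext hp
      have htu : Tendsto (fun n => u (n + N)) atTop (𝓝 a) :=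
        hu.comp (tendsto_add_atTop_nat N)
      have hxa : f x = a := by
        have h1 : ClusterPt (f x) (map (fun n => u (n + N)) atTop) := by
          rw [← hfp]; exact hfx
        have h2 : map (fun n => u (n + N)) atTop ≤ 𝓝 a := htu
        have h3 : ClusterPt (f x) (𝓝 a) := h1.mono h2
        exact t2_iff_nhds.1 ‹T2Space Y› h3.neBot
      obtain ⟨ψ, hψ, hψt⟩ := TopologicalSpace.FirstCountableTopology.tendsto_subseq hx
      refine ⟨x, hxa, fun k => ψ k + N, ?_, p ∘ ψ, fun k => hp (ψ k), hψt⟩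
      exact fun i j hij => by simpa using hψ hij
    · push_neg at H
      have hcr : IsClosed (Set.range p) := isClosed_range_of_no_clusterPt H
      have him : IsClosed (f '' Set.range p) := hcl _ hcr
      have haim : a ∈ f '' Set.range p := by
        have : a ∈ closure (f '' Set.range p) := by
          refine mem_closure_of_tendsto
            (hu.comp (tendsto_add_atTop_nat N)) ?_
          exact Eventually.of_forall fun n => ⟨p n, ⟨n, rfl⟩, hp n⟩
        rwa [him.closure_eq] at this
      obtain ⟨x, ⟨m, rfl⟩, hfm⟩ := haim
      exact absurd (hp m ▸ hfm) (hN (m + N) (by omega))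

/-- If `f₁ : X₁ → Y₁` and `f₂ : X₂ → Y₂` are continuous surjective closed
maps between metrizable topological spaces, then the product map
`f₁ × f₂ : X₁ × X₂ → Y₁ × Y₂` is a quotient map. -/
theorem isQuotientMap_prodMap_of_isClosedMap
    {X₁ Y₁ X₂ Y₂ : Type*}
    [TopologicalSpace X₁] [TopologicalSpace Y₁] [TopologicalSpace X₂] [TopologicalSpace Y₂]
    [TopologicalSpace.MetrizableSpace X₁] [TopologicalSpace.MetrizableSpace Y₁]
    [TopologicalSpace.MetrizableSpace X₂] [TopologicalSpace.MetrizableSpace Y₂]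
    {f₁ : X₁ → Y₁} {f₂ : X₂ → Y₂}
    (hc₁ : Continuous f₁) (hs₁ : Function.Surjective f₁) (hcl₁ : IsClosedMap f₁)
    (hc₂ : Continuous f₂) (hs₂ : Function.Surjective f₂) (hcl₂ : IsClosedMap f₂) :
    Topology.IsQuotientMap (Prod.map f₁ f₂) := by
  rw [Topology.isQuotientMap_iff]
  refine ⟨.of_isOpen_preimage_iff_isOpen fun U => ⟨fun hV => ?_, fun hU => hU.preimage (hc₁.prodMap hc₂)⟩, hs₁.prodMap hs₂⟩
  rw [← isClosed_compl_iff]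
  refine IsSeqClosed.isClosed fun s L hsU hL => ?_
  by_contra hLU
  rw [Set.notMem_compl_iff] at hLU
  have ha : Tendsto (fun n => (s n).1) atTop (𝓝 L.1) := (continuous_fst.tendsto L).comp hL
  obtain ⟨x₁, hx₁, φ, hφ, q₁, hq₁f, hq₁t⟩ := exists_subseq_lift hc₁ hs₁ hcl₁ ha
  have hb : Tendsto (fun k => (s (φ k)).2) atTop (𝓝 L.2) :=
    ((continuous_snd.tendsto L).comp hL).comp hφ.tendsto_atTop
  obtain ⟨x₂, hx₂, ψ, hψ, q₂, hq₂f, hq₂t⟩ := exists_subseq_lift hc₂ hs₂ hcl₂ hb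
  have hxV : (x₁, x₂) ∈ Prod.map f₁ f₂ ⁻¹' U := by
    simp only [Set.mem_preimage, Prod.map_apply, hx₁, hx₂]
    exact hLU
  have hw : Tendsto (fun k => ((q₁ (ψ k)), q₂ k)) atTop (𝓝 (x₁, x₂)) :=
    (hq₁t.comp hψ.tendsto_atTop).prodMk_nhds hq₂t
  have := (hw.eventually (hV.eventually_mem hxV)).exists
  obtain ⟨k, hk⟩ := this
  have : s (φ (ψ k)) ∈ U := by
    have : Prod.map f₁ f₂ (q₁ (ψ k), q₂ k) ∈ U := hk
    simpa [Prod.map_apply, hq₁f (ψ k), hq₂f k, Prod.ext_iff] using this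
  exact hsU (φ (ψ k)) this
end

section
/- Let E be a real normed vector space, K a finite simplicial complex in E, and A a full subcomplex of K. Then the underlying space |A| is contained in the regular neighborhood St(A;K), and there is a strong deformation retraction of St(A;K) onto |A|: a continuous map H : St(A;K) × [0,1] → St(A;K) with H(z,0) = z for all z, H(z,1) ∈ |A| for all z, and H(a,t) = a for all a ∈ |A| and all t ∈ [0,1]. -/
open Geometry Set

variable {E : Type*} [NormedAddCommGroup E] [NormedSpace ℝ E]

/-- The combinatorial interior of a face `s`: the convex hull of `s` minus the union of the
convex hulls of the proper subsets of `s`. -/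
def combInterior (s : Finset E) : Set E :=
  convexHull ℝ (s : Set E) \ ⋃ (t : Finset E) (_ : t ⊂ s), convexHull ℝ (t : Set E)

/-- The regular neighborhood (open star) of the set of vertices `V` in the complex with set of
faces `F`: the union of the combinatorial interiors of those faces in `F` that contain at least
one vertex belonging to `V`. -/
def starOf (F : Set (Finset E)) (V : Set E) : Set E :=
  ⋃ s ∈ {s ∈ F | ∃ v ∈ V, v ∈ s}, combInterior s

section AuxRegNbhd
open Finset

lemma unique_weights {s : Finset E} (hs : AffineIndependent ℝ ((↑) : s → E))
    {w w' : E → ℝ} (hw : ∑ y ∈ s, w y = 1) (hw' : ∑ y ∈ s, w' y = 1)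
    (h : ∑ y ∈ s, w y • y = ∑ y ∈ s, w' y • y) : ∀ y ∈ s, w y = w' y := by
  have h1 : ∑ v : ↥s, w ↑v = 1 := by rw [Finset.sum_coe_sort]; exact hw
  have h1' : ∑ v : ↥s, w' ↑v = 1 := by rw [Finset.sum_coe_sort]; exact hw'
  have h2 : ∑ v : ↥s, w ↑v • (v : E) = ∑ v : ↥s, w' ↑v • (v : E) := by
    rw [Finset.sum_coe_sort s (fun y => w y • y), Finset.sum_coe_sort s (fun y => w' y • y)]
    exact h
  have key := hs.indicator_eq_of_affineCombination_eq Finset.univ Finset.univ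
    (fun v => w ↑v) (fun v => w' ↑v) h1 h1' ?_
  · intro y hy
    have := congrFun key ⟨y, hy⟩
    simpa using this
  · rw [Finset.affineCombination_eq_linear_combination _ _ _ h1,
      Finset.affineCombination_eq_linear_combination _ _ _ h1']
    exact h2

def IsWt (K : SimplicialComplex ℝ E) (z : E) (w : E → ℝ) : Prop :=
  (∀ y, 0 ≤ w y) ∧ ∃ s ∈ K.faces, (∀ y ∉ s, w y = 0) ∧ ∑ y ∈ s, w y = 1 ∧ ∑ y ∈ s, w y • y = z

lemma exists_isWt {K : SimplicialComplex ℝ E} {z : E} (hz : z ∈ K.space) : ∃ w, IsWt K z w := by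
  rw [SimplicialComplex.mem_space_iff] at hz
  obtain ⟨s, hs, hzs⟩ := hz
  obtain ⟨w, hw0, hw1, hwz⟩ := Finset.mem_convexHull'.1 hzs
  classical
  refine ⟨Set.indicator ↑s w, fun y => ?_, s, hs, fun y hy => ?_, ?_, ?_⟩
  · by_cases h : y ∈ s
    · rw [Set.indicator_of_mem (by exact_mod_cast h)]; exact hw0 y h
    · rw [Set.indicator_of_notMem (by exact_mod_cast h)]
  · rw [Set.indicator_of_notMem (by exact_mod_cast hy)]
  · rw [← hw1]; exact Finset.sum_congr rfl fun y hy => Set.indicator_of_mem (by exact_mod_cast hy) _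
  · rw [← hwz]; exact Finset.sum_congr rfl fun y hy => by
      rw [Set.indicator_of_mem (by exact_mod_cast hy)]

open scoped Classical in
noncomputable def sWt (K : SimplicialComplex ℝ E) (z : E) : E → ℝ :=
  if h : z ∈ K.space then (exists_isWt h).choose else 0

lemma sWt_isWt {K : SimplicialComplex ℝ E} {z : E} (hz : z ∈ K.space) : IsWt K z (sWt K z) := by
  classical
  rw [sWt, dif_pos hz]; exact (exists_isWt hz).choose_spec

lemma sWt_nonneg (K : SimplicialComplex ℝ E) (z y : E) : 0 ≤ sWt K z y := by
  by_cases h : z ∈ K.space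
  · exact (sWt_isWt h).1 y
  · classical
    rw [sWt, dif_neg h]
    exact le_rfl

/-- Uniqueness: the canonical weights agree with any representation over any face. -/
lemma sWt_eq {K : SimplicialComplex ℝ E} {s : Finset E} (hs : s ∈ K.faces) {z : E}
    (hz : z ∈ convexHull ℝ (s : Set E)) {w : E → ℝ}
    (hw1 : ∑ y ∈ s, w y = 1) (hwz : ∑ y ∈ s, w y • y = z) :
    ∀ y, sWt K z y = Set.indicator ↑s w y := by
  classical
  have hzsp : z ∈ K.space := K.convexHull_subset_space hs hz
  obtain ⟨h0, s', hs', hsupp, hsum, hcombo⟩ := sWt_isWt hzsp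
  have hz' : z ∈ convexHull ℝ (s' : Set E) :=
    Finset.mem_convexHull'.2 ⟨sWt K z, fun y _ => sWt_nonneg K z y, hsum, hcombo⟩
  have hz2 : z ∈ convexHull ℝ ((s' ∩ s : Finset E) : Set E) := by
    have := K.inter_subset_convexHull hs' hs ⟨hz', hz⟩
    simpa using this
  obtain ⟨w'', h0'', h1'', hz''⟩ := Finset.mem_convexHull'.1 hz2
  have wimem : ∀ y ∈ s' ∩ s, Set.indicator (↑(s' ∩ s) : Set E) w'' y = w'' y :=
    fun y hy => Set.indicator_of_mem (by exact_mod_cast hy) _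
  have winot : ∀ y ∉ s' ∩ s, Set.indicator (↑(s' ∩ s) : Set E) w'' y = 0 :=
    fun y hy => Set.indicator_of_notMem (by exact_mod_cast hy) _
  have hsum_wi : ∀ u : Finset E, (s' ∩ s) ⊆ u → ∑ y ∈ u, Set.indicator (↑(s' ∩ s) : Set E) w'' y = 1 := by
    intro u hu
    rw [← Finset.sum_subset hu (fun y _ hy => winot y hy), ← h1'']
    exact Finset.sum_congr rfl fun y hy => wimem y hy
  have hcombo_wi : ∀ u : Finset E, (s' ∩ s) ⊆ u → ∑ y ∈ u, Set.indicator (↑(s' ∩ s) : Set E) w'' y • y = z := by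
    intro u hu
    rw [← Finset.sum_subset hu (fun y _ hy => by rw [winot y hy, zero_smul]), ← hz'']
    exact Finset.sum_congr rfl fun y hy => by rw [wimem y hy]
  have e1 : ∀ y ∈ s', sWt K z y = Set.indicator (↑(s' ∩ s) : Set E) w'' y :=
    unique_weights (K.indep hs') hsum (hsum_wi s' Finset.inter_subset_left)
      (by rw [hcombo, hcombo_wi s' Finset.inter_subset_left])
  have e2 : ∀ y ∈ s, w y = Set.indicator (↑(s' ∩ s) : Set E) w'' y :=
    unique_weights (K.indep hs) hw1 (hsum_wi s Finset.inter_subset_right)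
      (by rw [hwz, hcombo_wi s Finset.inter_subset_right])
  intro y
  by_cases hys : y ∈ s
  · rw [Set.indicator_of_mem (by exact_mod_cast hys), e2 y hys]
    by_cases hys' : y ∈ s'
    · exact e1 y hys'
    · rw [hsupp y hys', winot y (by simp [hys'])]
  · rw [Set.indicator_of_notMem (by exact_mod_cast hys)]
    by_cases hys' : y ∈ s'
    · rw [e1 y hys', winot y (by simp [hys])]
    · exact hsupp y hys'

section Derived
variable {K : SimplicialComplex ℝ E} {s : Finset E} {z : E}

lemma sWt_supp (hs : s ∈ K.faces) (hz : z ∈ convexHull ℝ (s : Set E)) :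
    ∀ y ∉ s, sWt K z y = 0 := by
  obtain ⟨w, hw0, hw1, hwz⟩ := Finset.mem_convexHull'.1 hz
  intro y hy
  rw [sWt_eq hs hz hw1 hwz y, Set.indicator_of_notMem (by exact_mod_cast hy)]

lemma sWt_sum (hs : s ∈ K.faces) (hz : z ∈ convexHull ℝ (s : Set E)) :
    ∑ y ∈ s, sWt K z y = 1 := by
  obtain ⟨w, hw0, hw1, hwz⟩ := Finset.mem_convexHull'.1 hz
  rw [← hw1]
  exact Finset.sum_congr rfl fun y hy => by
    rw [sWt_eq hs hz hw1 hwz y, Set.indicator_of_mem (by exact_mod_cast hy)]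

lemma sWt_combo (hs : s ∈ K.faces) (hz : z ∈ convexHull ℝ (s : Set E)) :
    ∑ y ∈ s, sWt K z y • y = z := by
  obtain ⟨w, hw0, hw1, hwz⟩ := Finset.mem_convexHull'.1 hz
  have : ∑ y ∈ s, sWt K z y • y = ∑ y ∈ s, w y • y := Finset.sum_congr rfl fun y hy => by
    rw [sWt_eq hs hz hw1 hwz y, Set.indicator_of_mem (by exact_mod_cast hy)]
  rw [this, hwz]

open scoped Classical in
lemma sWt_filter_sum (hs : s ∈ K.faces) (hz : z ∈ convexHull ℝ (s : Set E)) :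
    ∑ y ∈ s.filter (fun y => sWt K z y ≠ 0), sWt K z y = 1 := by
  rw [Finset.sum_filter_ne_zero]; exact sWt_sum hs hz

open scoped Classical in
lemma sWt_filter_combo (hs : s ∈ K.faces) (hz : z ∈ convexHull ℝ (s : Set E)) :
    ∑ y ∈ s.filter (fun y => sWt K z y ≠ 0), sWt K z y • y = z := by
  have h : ∑ y ∈ s.filter (fun y => sWt K z y ≠ 0), sWt K z y • y
      = ∑ y ∈ s, sWt K z y • y := Finset.sum_subset (Finset.filter_subset _ s)
    (fun y hy hyn => by
      have h0 : sWt K z y = 0 := by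
        by_contra hne; exact hyn (Finset.mem_filter.2 ⟨hy, hne⟩)
      rw [h0, zero_smul])
  rw [h]; exact sWt_combo hs hz

open scoped Classical in
lemma mem_convexHull_filter (hs : s ∈ K.faces) (hz : z ∈ convexHull ℝ (s : Set E)) :
    z ∈ convexHull ℝ ((s.filter (fun y => sWt K z y ≠ 0) : Finset E) : Set E) :=
  Finset.mem_convexHull'.2 ⟨sWt K z, fun y _ => sWt_nonneg K z y,
    sWt_filter_sum hs hz, sWt_filter_combo hs hz⟩

open scoped Classical in
lemma filter_nonempty (hs : s ∈ K.faces) (hz : z ∈ convexHull ℝ (s : Set E)) :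
    (s.filter (fun y => sWt K z y ≠ 0)).Nonempty := by
  by_contra h
  rw [Finset.not_nonempty_iff_eq_empty] at h
  have := sWt_filter_sum hs hz
  rw [h, Finset.sum_empty] at this
  exact zero_ne_one this

open scoped Classical in
lemma filter_face (hs : s ∈ K.faces) (hz : z ∈ convexHull ℝ (s : Set E)) :
    s.filter (fun y => sWt K z y ≠ 0) ∈ K.faces :=
  K.down_closed hs (Finset.filter_subset _ _) (filter_nonempty hs hz)

open scoped Classical in
/-- The point lies in the combinatorial interior of the support of its canonical weights. -/
lemma mem_combInterior_filter (hs : s ∈ K.faces) (hz : z ∈ convexHull ℝ (s : Set E)) :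
    z ∈ combInterior (s.filter (fun y => sWt K z y ≠ 0)) := by
  refine ⟨mem_convexHull_filter hs hz, ?_⟩
  intro hmem
  simp only [Set.mem_iUnion] at hmem
  obtain ⟨t, hts, hzt⟩ := hmem
  have htne : t ≠ ∅ := by rintro rfl; simp at hzt
  have htK : t ∈ K.faces :=
    K.down_closed (filter_face hs hz) hts.subset (Finset.nonempty_iff_ne_empty.2 htne)
  obtain ⟨w, hw0, hw1, hwz⟩ := Finset.mem_convexHull'.1 hzt
  obtain ⟨y, hyf, hyt⟩ := Finset.exists_of_ssubset hts
  have h1 := sWt_eq htK hzt hw1 hwz y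
  rw [Set.indicator_of_notMem (by exact_mod_cast hyt)] at h1
  exact (Finset.mem_filter.1 hyf).2 h1

/-- Positivity of canonical weights on the combinatorial interior. -/
lemma pos_on_combInterior (hs : s ∈ K.faces) (hz : z ∈ combInterior s) :
    ∀ y ∈ s, 0 < sWt K z y := by
  classical
  intro y hy
  rcases (sWt_nonneg K z y).lt_or_eq with h | h
  · exact h
  exfalso
  apply hz.2
  simp only [Set.mem_iUnion]
  refine ⟨s.erase y, Finset.erase_ssubset hy, Finset.mem_convexHull'.2
    ⟨sWt K z, fun x _ => sWt_nonneg K z x, ?_, ?_⟩⟩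
  · rw [Finset.sum_erase _ h.symm]; exact sWt_sum hs hz.1
  · rw [Finset.sum_erase _ (by rw [← h, zero_smul])]; exact sWt_combo hs hz.1

/-- A face whose combinatorial interior contains `z` is contained in any face whose hull
contains `z`. -/
lemma combInterior_subset_face {s₀ : Finset E} (hs₀ : s₀ ∈ K.faces) (hs : s ∈ K.faces)
    (hz₀ : z ∈ combInterior s₀) (hz : z ∈ convexHull ℝ (s : Set E)) : s₀ ⊆ s := by
  classical
  by_contra h
  apply hz₀.2
  simp only [Set.mem_iUnion]
  refine ⟨s₀ ∩ s, ?_, ?_⟩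
  · refine (Finset.ssubset_iff_of_subset Finset.inter_subset_left).2 ?_
    obtain ⟨y, hy, hyn⟩ := Finset.not_subset.1 h
    exact ⟨y, hy, by simp [hyn]⟩
  · have := K.inter_subset_convexHull hs₀ hs ⟨hz₀.1, hz⟩
    simpa using this

end Derived

section Homeo
variable {s : Finset E}

/-- The canonical map from the standard simplex onto the convex hull of a finset. -/
noncomputable def simplexMap (s : Finset E) (w : stdSimplex ℝ ↥s) : ↥(convexHull ℝ (s : Set E)) :=
  ⟨∑ v : ↥s, (w : ↥s → ℝ) v • (v : E), by
    have h1 : ∑ v : ↥s, (w : ↥s → ℝ) v = 1 := w.2.2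
    rw [← Finset.centerMass_eq_of_sum_1 _ _ h1]
    exact Finset.centerMass_mem_convexHull _ (fun i _ => w.2.1 i) (lt_of_lt_of_eq zero_lt_one w.2.2.symm)
      (fun i _ => i.2)⟩

lemma simplexMap_continuous (s : Finset E) : Continuous (simplexMap s) := by
  refine Continuous.subtype_mk ?_ _
  exact continuous_finset_sum _ fun v _ =>
    ((continuous_apply v).comp continuous_subtype_val).smul continuous_const

lemma simplexMap_bijective (hs : AffineIndependent ℝ ((↑) : s → E)) :
    Function.Bijective (simplexMap s) := by
  constructor
  · rintro ⟨w, hw0, hw1⟩ ⟨w', hw0', hw1'⟩ h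
    have h2 : ∑ v : ↥s, w v • (v : E) = ∑ v : ↥s, w' v • (v : E) := congrArg Subtype.val h
    have key := hs.indicator_eq_of_affineCombination_eq Finset.univ Finset.univ w w' hw1 hw1' ?_
    · ext v
      have := congrFun key v
      have h' : w v = w' v := by simpa using this
      exact h'
    · rw [Finset.affineCombination_eq_linear_combination _ _ _ hw1,
        Finset.affineCombination_eq_linear_combination _ _ _ hw1']
      exact h2
  · rintro ⟨z, hz⟩
    obtain ⟨w, hw0, hw1, hwz⟩ := Finset.mem_convexHull'.1 hz
    refine ⟨⟨fun v => w ↑v, fun v => hw0 _ v.2, by rw [Finset.sum_coe_sort]; exact hw1⟩, ?_⟩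
    apply Subtype.ext
    show ∑ v : ↥s, w ↑v • (v : E) = z
    rw [Finset.sum_coe_sort s (fun y => w y • y)]; exact hwz

/-- The homeomorphism from the standard simplex to the convex hull of an affinely
independent finset. -/
noncomputable def faceHomeo (hs : AffineIndependent ℝ ((↑) : s → E)) :
    stdSimplex ℝ ↥s ≃ₜ ↥(convexHull ℝ (s : Set E)) :=
  Continuous.homeoOfEquivCompactToT2
    (f := Equiv.ofBijective _ (simplexMap_bijective hs)) (simplexMap_continuous s)

/-- The inverse homeomorphism recovers the canonical weights. -/
lemma faceHomeo_symm_eq {K : SimplicialComplex ℝ E} (hs : s ∈ K.faces) {z : E}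
    (hz : z ∈ convexHull ℝ (s : Set E)) (v : ↥s) :
    ((faceHomeo (K.indep hs)).symm ⟨z, hz⟩ : ↥s → ℝ) v = sWt K z ↑v := by
  classical
  set w := (faceHomeo (K.indep hs)).symm ⟨z, hz⟩ with hw
  have happ : simplexMap s w = ⟨z, hz⟩ := by
    have := (faceHomeo (K.indep hs)).apply_symm_apply ⟨z, hz⟩
    exact this
  have hcombo : ∑ v : ↥s, (w : ↥s → ℝ) v • (v : E) = z := congrArg Subtype.val happ
  set w' : E → ℝ := fun y => if h : y ∈ s then (w : ↥s → ℝ) ⟨y, h⟩ else 0 with hw'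
  have e1 : ∀ v : ↥s, w' ↑v = (w : ↥s → ℝ) v := fun v => by
    simp only [hw', dif_pos v.2]
  have hsum' : ∑ y ∈ s, w' y = 1 := by
    rw [← Finset.sum_coe_sort s w']
    rw [Finset.sum_congr rfl fun v _ => e1 v]
    exact w.2.2
  have hcombo' : ∑ y ∈ s, w' y • y = z := by
    rw [← Finset.sum_coe_sort s (fun y => w' y • y)]
    rw [Finset.sum_congr rfl fun v _ => by rw [e1 v]]
    exact hcombo
  have := sWt_eq hs hz hsum' hcombo' ↑v
  rw [Set.indicator_of_mem (by exact_mod_cast v.2), e1 v] at this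
  exact this.symm

end Homeo

section Derived2
variable {K : SimplicialComplex ℝ E} {s u : Finset E} {z : E}

lemma mem_combInterior_of_pos (hu : u ∈ K.faces) {w : E → ℝ} {x : E}
    (hpos : ∀ y ∈ u, 0 < w y) (h1 : ∑ y ∈ u, w y = 1) (hx : ∑ y ∈ u, w y • y = x) :
    x ∈ combInterior u := by
  classical
  have hxh : x ∈ convexHull ℝ (u : Set E) :=
    Finset.mem_convexHull'.2 ⟨w, fun y hy => (hpos y hy).le, h1, hx⟩
  have hfe : u.filter (fun y => sWt K x y ≠ 0) = u := Finset.filter_eq_self.2 fun y hy => by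
    have h := sWt_eq hu hxh h1 hx y
    rw [Set.indicator_of_mem (by exact_mod_cast hy)] at h
    rw [h]; exact (hpos y hy).ne'
  have := mem_combInterior_filter hu hxh
  rwa [hfe] at this

lemma mem_starOf {V : Set E} (hu : u ∈ K.faces) (hv : ∃ v ∈ V, v ∈ u)
    (hz : z ∈ combInterior u) : z ∈ starOf K.faces V :=
  Set.mem_biUnion ⟨hu, hv⟩ hz

end Derived2

open scoped Classical in
/-- The straight-line homotopy pushing mass off the non-`V` vertices. -/
noncomputable def gmap (K : SimplicialComplex ℝ E) (V : Set E) (S : Finset E) (z : E) (t : ℝ) :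
    E :=
  (∑ y ∈ S, (if y ∈ V then 1 else 1 - t) * sWt K z y)⁻¹ •
    ∑ y ∈ S, ((if y ∈ V then 1 else 1 - t) * sWt K z y) • y

section Gmap
variable {K : SimplicialComplex ℝ E} {V : Set E} {S s₀ : Finset E} {z : E} {t : ℝ}

open scoped Classical

/-- Main structural lemma: where `gmap` lands. -/
lemma gmap_mem (hs₀ : s₀ ∈ K.faces) (hz : z ∈ combInterior s₀) (hS : s₀ ⊆ S)
    (ht0 : 0 ≤ t) (ht1 : t ≤ 1) {v₀ : E} (hv₀V : v₀ ∈ V) (hv₀ : v₀ ∈ s₀) :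
    ∃ u ∈ K.faces, u ⊆ s₀ ∧ v₀ ∈ u ∧ gmap K V S z t ∈ combInterior u ∧
      (t = 1 → (u : Set E) ⊆ V) := by
  set cf : E → ℝ := fun y => (if y ∈ V then 1 else 1 - t) * sWt K z y with hcf
  have cf_nonneg : ∀ y, 0 ≤ cf y := fun y => by
    apply mul_nonneg _ (sWt_nonneg K z y)
    split_ifs
    · exact zero_le_one
    · linarith
  set u : Finset E := s₀.filter (fun y => cf y ≠ 0) with hu
  have hus₀ : u ⊆ s₀ := Finset.filter_subset _ _
  have hcfv₀ : cf v₀ = sWt K z v₀ := by rw [hcf]; simp [hv₀V]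
  have hv₀pos : 0 < sWt K z v₀ := pos_on_combInterior hs₀ hz v₀ hv₀
  have hv₀u : v₀ ∈ u := Finset.mem_filter.2 ⟨hv₀, by rw [hcfv₀]; exact hv₀pos.ne'⟩
  have huK : u ∈ K.faces := K.down_closed hs₀ hus₀ ⟨v₀, hv₀u⟩
  have czero : ∀ y ∈ S, y ∉ u → cf y = 0 := by
    intro y _ hyu
    by_cases hys₀ : y ∈ s₀
    · exact by_contra fun hne => hyu (Finset.mem_filter.2 ⟨hys₀, hne⟩)
    · rw [hcf]; simp [sWt_supp hs₀ hz.1 y hys₀]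
  have hm : ∑ y ∈ S, cf y = ∑ y ∈ u, cf y :=
    (Finset.sum_subset (hus₀.trans hS) fun y hy hyu => czero y hy hyu).symm
  have hnum : ∑ y ∈ S, cf y • y = ∑ y ∈ u, cf y • y :=
    (Finset.sum_subset (hus₀.trans hS) fun y hy hyu => by rw [czero y hy hyu, zero_smul]).symm
  set m : ℝ := ∑ y ∈ u, cf y with hmdef
  have hmpos : 0 < m := by
    have h1 : cf v₀ ≤ m := Finset.single_le_sum (fun y _ => cf_nonneg y) hv₀u
    rw [hcfv₀] at h1
    exact lt_of_lt_of_le hv₀pos h1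
  have hg : gmap K V S z t = ∑ y ∈ u, (m⁻¹ * cf y) • y := by
    rw [gmap]
    rw [show (∑ y ∈ S, (if y ∈ V then 1 else 1 - t) * sWt K z y) = ∑ y ∈ S, cf y from rfl,
      show (∑ y ∈ S, ((if y ∈ V then 1 else 1 - t) * sWt K z y) • y) = ∑ y ∈ S, cf y • y from
        rfl, hm, hnum, Finset.smul_sum]
    exact Finset.sum_congr rfl fun y _ => by rw [smul_smul]
  have hsum1 : ∑ y ∈ u, m⁻¹ * cf y = 1 := by
    rw [← Finset.mul_sum, inv_mul_cancel₀ hmpos.ne']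
  have hposu : ∀ y ∈ u, 0 < m⁻¹ * cf y := fun y hy =>
    mul_pos (inv_pos.2 hmpos) (lt_of_le_of_ne (cf_nonneg y)
      (Ne.symm (Finset.mem_filter.1 hy).2))
  refine ⟨u, huK, hus₀, hv₀u, ?_, ?_⟩
  · exact mem_combInterior_of_pos huK hposu hsum1 hg.symm
  · rintro rfl y hy
    have := (Finset.mem_filter.1 hy).2
    by_contra hyV
    apply this
    rw [hcf]
    simp [hyV]

end Gmap

section Gmap2
variable {K : SimplicialComplex ℝ E} {V : Set E} {S s₀ : Finset E} {z : E} {t : ℝ}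

open scoped Classical

lemma gmap_eq_self (hs₀ : s₀ ∈ K.faces) (hz : z ∈ convexHull ℝ (s₀ : Set E)) (hS : s₀ ⊆ S)
    (hcf : ∀ y, (if y ∈ V then 1 else 1 - t) * sWt K z y = sWt K z y) :
    gmap K V S z t = z := by
  have hm : ∑ y ∈ S, (if y ∈ V then 1 else 1 - t) * sWt K z y = 1 := by
    rw [Finset.sum_congr rfl fun y _ => hcf y]
    rw [← Finset.sum_subset hS fun y _ hy => sWt_supp hs₀ hz y hy]
    exact sWt_sum hs₀ hz
  have hn : ∑ y ∈ S, ((if y ∈ V then 1 else 1 - t) * sWt K z y) • y = z := by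
    rw [Finset.sum_congr rfl fun y _ => by rw [hcf y]]
    rw [← Finset.sum_subset hS fun y _ hy => by rw [sWt_supp hs₀ hz y hy, zero_smul]]
    exact sWt_combo hs₀ hz
  rw [gmap, hm, hn, inv_one, one_smul]

lemma gmap_zero (hs₀ : s₀ ∈ K.faces) (hz : z ∈ convexHull ℝ (s₀ : Set E)) (hS : s₀ ⊆ S) :
    gmap K V S z 0 = z :=
  gmap_eq_self hs₀ hz hS fun y => by split_ifs <;> ring

/-- If the support of the weights of `z` is inside `V`, `gmap` fixes `z` for all times. -/
lemma gmap_eq_self_of_supp (hs₀ : s₀ ∈ K.faces) (hz : z ∈ convexHull ℝ (s₀ : Set E))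
    (hS : s₀ ⊆ S) (hsupp : ∀ y, y ∉ V → sWt K z y = 0) :
    gmap K V S z t = z :=
  gmap_eq_self hs₀ hz hS fun y => by
    by_cases h : y ∈ V
    · simp [h]
    · simp [h, hsupp y h]

end Gmap2

section Star
variable {K A : SimplicialComplex ℝ E} {z : E}

open scoped Classical

/-- Every vertex of a face of `A` is a vertex of `A`. -/
lemma face_subset_vertices {u : Finset E} (hu : u ∈ A.faces) : (u : Set E) ⊆ A.vertices := by
  intro y hy
  rw [SimplicialComplex.mem_vertices]
  exact A.down_closed hu (Finset.singleton_subset_iff.2 hy) (Finset.singleton_nonempty y)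

/-- If `z ∈ A.space` then the canonical `K`-weights of `z` vanish off `A.vertices`. -/
lemma sWt_supp_of_spaceA (hsub : A.faces ⊆ K.faces) (hz : z ∈ A.space) :
    ∀ y, y ∉ A.vertices → sWt K z y = 0 := by
  rw [SimplicialComplex.mem_space_iff] at hz
  obtain ⟨u, hu, hzu⟩ := hz
  intro y hy
  by_cases hyu : y ∈ u
  · exact absurd (face_subset_vertices hu hyu) hy
  · exact sWt_supp (hsub hu) hzu y hyu

lemma space_subset_star (hsub : A.faces ⊆ K.faces) :
    A.space ⊆ starOf K.faces A.vertices := by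
  intro z hz
  obtain ⟨u, hu, hzu⟩ := SimplicialComplex.mem_space_iff.1 hz
  have huK : u ∈ K.faces := hsub hu
  set T : Finset E := u.filter (fun y => sWt K z y ≠ 0) with hT
  have hTu : T ⊆ u := Finset.filter_subset _ _
  have hTne : T.Nonempty := filter_nonempty huK hzu
  obtain ⟨v, hv⟩ := hTne
  refine mem_starOf (K.down_closed huK hTu ⟨v, hv⟩)
    ⟨v, face_subset_vertices hu (hTu hv), hv⟩ (mem_combInterior_filter huK hzu)

/-- Unpack membership in the star. -/
lemma exists_of_mem_starOf {V : Set E} (hz : z ∈ starOf K.faces V) :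
    ∃ s₀ ∈ K.faces, (∃ v ∈ V, v ∈ s₀) ∧ z ∈ combInterior s₀ := by
  simp only [starOf, Set.mem_iUnion, Set.mem_setOf_eq] at hz
  obtain ⟨s₀, ⟨h1, h2⟩, h3⟩ := hz
  exact ⟨s₀, h1, h2, h3⟩

end Star

section Formula
variable {K : SimplicialComplex ℝ E} {V : Set E} {S s : Finset E} {z : E} {t : ℝ}

open scoped Classical

lemma gmap_formula (hs : s ∈ K.faces) (hz : z ∈ convexHull ℝ (s : Set E)) (hS : s ⊆ S) (t : ℝ) :
    gmap K V S z t =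
      (∑ v : ↥s, (if (v : E) ∈ V then 1 else 1 - t) *
          ((faceHomeo (K.indep hs)).symm ⟨z, hz⟩ : ↥s → ℝ) v)⁻¹ •
        ∑ v : ↥s, ((if (v : E) ∈ V then 1 else 1 - t) *
          ((faceHomeo (K.indep hs)).symm ⟨z, hz⟩ : ↥s → ℝ) v) • (v : E) := by
  have e : ∀ v : ↥s, ((faceHomeo (K.indep hs)).symm ⟨z, hz⟩ : ↥s → ℝ) v = sWt K z ↑v :=
    faceHomeo_symm_eq hs hz
  have h1 : (∑ v : ↥s, (if (v : E) ∈ V then 1 else 1 - t) *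
        ((faceHomeo (K.indep hs)).symm ⟨z, hz⟩ : ↥s → ℝ) v)
      = ∑ y ∈ S, (if y ∈ V then 1 else 1 - t) * sWt K z y := by
    rw [Finset.sum_congr rfl fun (v : ↥s) (_ : v ∈ Finset.univ) => by rw [e v]]
    rw [Finset.sum_coe_sort s (fun y => (if y ∈ V then 1 else 1 - t) * sWt K z y)]
    exact Finset.sum_subset hS fun y _ hy => by rw [sWt_supp hs hz y hy, mul_zero]
  have h2 : (∑ v : ↥s, ((if (v : E) ∈ V then 1 else 1 - t) *
        ((faceHomeo (K.indep hs)).symm ⟨z, hz⟩ : ↥s → ℝ) v) • (v : E))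
      = ∑ y ∈ S, ((if y ∈ V then 1 else 1 - t) * sWt K z y) • y := by
    rw [Finset.sum_congr rfl fun (v : ↥s) (_ : v ∈ Finset.univ) => by rw [e v]]
    rw [Finset.sum_coe_sort s (fun y => ((if y ∈ V then 1 else 1 - t) * sWt K z y) • y)]
    exact Finset.sum_subset hS fun y _ hy => by rw [sWt_supp hs hz y hy, mul_zero, zero_smul]
  rw [gmap, h1, h2]

end Formula

end AuxRegNbhd

/-- If `K` is a finite simplicial complex and `A` is a full subcomplex of `K`,
then `|A| ⊆ St(A;K)` and there is a strong deformation retraction of the regular neighborhood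
`St(A;K)` onto the underlying space `|A|`. -/
theorem regular_neighborhood_deformation_retract
    (K A : Geometry.SimplicialComplex ℝ E)
    (hKfin : K.faces.Finite)
    (hsub : A.faces ⊆ K.faces)
    (hfull : ∀ s ∈ K.faces, (s : Set E) ⊆ A.vertices → s ∈ A.faces) :
    A.space ⊆ starOf K.faces A.vertices ∧
    ∃ H : ↥(starOf K.faces A.vertices) × ↥unitInterval → ↥(starOf K.faces A.vertices),
      Continuous H ∧
      (∀ z, H (z, 0) = z) ∧
      (∀ z, ((H (z, 1) : E)) ∈ A.space) ∧
      (∀ z : ↥(starOf K.faces A.vertices), (z : E) ∈ A.space → ∀ t, H (z, t) = z) := by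
  classical
  set V := A.vertices with hV
  set S : Finset E := hKfin.toFinset.sup id with hS
  have hSS : ∀ {s : Finset E}, s ∈ K.faces → s ⊆ S := fun {s} hs =>
    Finset.le_sup (f := id) (hKfin.mem_toFinset.2 hs)
  have hGmem : ∀ (z : ↥(starOf K.faces V)) (t : ↥unitInterval),
      gmap K V S ↑z ↑t ∈ starOf K.faces V := by
    intro z t
    obtain ⟨s₀, hs₀, ⟨v₀, hv₀V, hv₀⟩, hzi⟩ := exists_of_mem_starOf z.2
    obtain ⟨u, huK, hus₀, hv₀u, hgi, _⟩ :=
      gmap_mem hs₀ hzi (hSS hs₀) t.2.1 t.2.2 hv₀V hv₀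
    exact mem_starOf huK ⟨v₀, hv₀V, hv₀u⟩ hgi
  refine ⟨space_subset_star hsub,
    fun p => ⟨gmap K V S ↑p.1 ↑p.2, hGmem p.1 p.2⟩, ?_, ?_, ?_, ?_⟩
  · -- Continuity
    refine Continuous.subtype_mk ?_ _
    haveI : Finite ↥K.faces := hKfin.to_subtype
    refine LocallyFinite.continuous
      (f := fun s : ↥K.faces => {p : ↥(starOf K.faces V) × ↥unitInterval |
        (p.1 : E) ∈ convexHull ℝ ((s : Finset E) : Set E)})
      (locallyFinite_of_finite _) ?_ ?_ ?_
    · apply Set.eq_univ_of_forall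
      intro p
      obtain ⟨s₀, hs₀, _, hzi⟩ := exists_of_mem_starOf p.1.2
      exact Set.mem_iUnion.2 ⟨⟨s₀, hs₀⟩, hzi.1⟩
    · intro i
      exact (i.1.finite_toSet.isClosed_convexHull (𝕜 := ℝ)).preimage
        (continuous_subtype_val.comp continuous_fst)
    · rintro ⟨s, hsK⟩
      rw [continuousOn_iff_continuous_restrict]
      set D : Set (↥(starOf K.faces V) × ↥unitInterval) :=
        {p | (p.1 : E) ∈ convexHull ℝ (s : Set E)} with hD
      have key : ∀ q : ↥D, gmap K V S ↑q.val.1 ↑q.val.2 =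
          (∑ v : ↥s, (if (v : E) ∈ V then 1 else 1 - ((q.val.2 : ℝ))) *
              ((faceHomeo (K.indep hsK)).symm ⟨↑q.val.1, q.prop⟩ : ↥s → ℝ) v)⁻¹ •
            ∑ v : ↥s, ((if (v : E) ∈ V then 1 else 1 - ((q.val.2 : ℝ))) *
              ((faceHomeo (K.indep hsK)).symm ⟨↑q.val.1, q.prop⟩ : ↥s → ℝ) v) • (v : E) :=
        fun q => gmap_formula hsK q.prop (hSS hsK) _
      have hrestr : (D.restrict fun p : ↥(starOf K.faces V) × ↥unitInterval =>
          gmap K V S ↑p.1 ↑p.2) = fun q : ↥D =>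
          (∑ v : ↥s, (if (v : E) ∈ V then 1 else 1 - ((q.val.2 : ℝ))) *
              ((faceHomeo (K.indep hsK)).symm ⟨↑q.val.1, q.prop⟩ : ↥s → ℝ) v)⁻¹ •
            ∑ v : ↥s, ((if (v : E) ∈ V then 1 else 1 - ((q.val.2 : ℝ))) *
              ((faceHomeo (K.indep hsK)).symm ⟨↑q.val.1, q.prop⟩ : ↥s → ℝ) v) • (v : E) :=
        funext key
      refine (congrArg Continuous hrestr).mpr ?_
      have hwc : Continuous fun q : ↥D =>
          ((faceHomeo (K.indep hsK)).symm ⟨↑q.val.1, q.prop⟩ : ↥s → ℝ) := by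
        have h1 : Continuous fun q : ↥D =>
            (⟨↑q.val.1, q.prop⟩ : ↥(convexHull ℝ (s : Set E))) :=
          Continuous.subtype_mk
            (continuous_subtype_val.comp (continuous_fst.comp continuous_subtype_val)) _
        exact continuous_subtype_val.comp ((faceHomeo (K.indep hsK)).continuous_symm.comp h1)
      have hτ : Continuous fun q : ↥D => ((q.val.2 : ℝ)) :=
        continuous_subtype_val.comp (continuous_snd.comp continuous_subtype_val)
      have hcf : ∀ v : ↥s, Continuous fun q : ↥D =>
          (if (v : E) ∈ V then 1 else 1 - ((q.val.2 : ℝ))) *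
            ((faceHomeo (K.indep hsK)).symm ⟨↑q.val.1, q.prop⟩ : ↥s → ℝ) v := by
        intro v
        apply Continuous.mul
        · split_ifs
          · exact continuous_const
          · exact continuous_const.sub hτ
        · exact (continuous_apply v).comp hwc
      have hden : Continuous fun q : ↥D => ∑ v : ↥s,
          (if (v : E) ∈ V then 1 else 1 - ((q.val.2 : ℝ))) *
            ((faceHomeo (K.indep hsK)).symm ⟨↑q.val.1, q.prop⟩ : ↥s → ℝ) v :=
        continuous_finset_sum _ fun v _ => hcf v
      have hnum : Continuous fun q : ↥D => ∑ v : ↥s,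
          ((if (v : E) ∈ V then 1 else 1 - ((q.val.2 : ℝ))) *
            ((faceHomeo (K.indep hsK)).symm ⟨↑q.val.1, q.prop⟩ : ↥s → ℝ) v) • (v : E) :=
        continuous_finset_sum _ fun v _ => (hcf v).smul continuous_const
      have hpos : ∀ q : ↥D, 0 < ∑ v : ↥s,
          (if (v : E) ∈ V then 1 else 1 - ((q.val.2 : ℝ))) *
            ((faceHomeo (K.indep hsK)).symm ⟨↑q.val.1, q.prop⟩ : ↥s → ℝ) v := by
        intro q
        obtain ⟨s₀, hs₀, ⟨v₀, hv₀V, hv₀⟩, hzi⟩ := exists_of_mem_starOf q.val.1.2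
        have hs₀s : s₀ ⊆ s := combInterior_subset_face hs₀ hsK hzi q.prop
        set vs : ↥s := ⟨v₀, hs₀s hv₀⟩ with hvs
        have hterm : (if ((vs : E)) ∈ V then 1 else 1 - ((q.val.2 : ℝ))) *
            ((faceHomeo (K.indep hsK)).symm ⟨↑q.val.1, q.prop⟩ : ↥s → ℝ) vs
            = sWt K (↑q.val.1) v₀ := by
          rw [if_pos hv₀V, one_mul, faceHomeo_symm_eq hsK q.prop vs]
        have hnn : ∀ v : ↥s, 0 ≤ (if ((v : E)) ∈ V then 1 else 1 - ((q.val.2 : ℝ))) *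
            ((faceHomeo (K.indep hsK)).symm ⟨↑q.val.1, q.prop⟩ : ↥s → ℝ) v := by
          intro v
          apply mul_nonneg
          · split_ifs
            · exact zero_le_one
            · have := q.val.2.2.2; linarith
          · exact ((faceHomeo (K.indep hsK)).symm ⟨↑q.val.1, q.prop⟩).2.1 v
        calc (0 : ℝ) < sWt K (↑q.val.1) v₀ := pos_on_combInterior hs₀ hzi v₀ hv₀
          _ ≤ _ := by
            rw [← hterm]
            exact Finset.single_le_sum (fun v _ => hnn v) (Finset.mem_univ vs)
      exact (hden.inv₀ fun q => (hpos q).ne').smul hnum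
  · intro z
    apply Subtype.ext
    obtain ⟨s₀, hs₀, _, hzi⟩ := exists_of_mem_starOf z.2
    exact gmap_zero hs₀ hzi.1 (hSS hs₀)
  · intro z
    obtain ⟨s₀, hs₀, ⟨v₀, hv₀V, hv₀⟩, hzi⟩ := exists_of_mem_starOf z.2
    obtain ⟨u, huK, hus₀, hv₀u, hgi, h1⟩ :=
      gmap_mem (t := ((1 : unitInterval) : ℝ)) hs₀ hzi (hSS hs₀) (by norm_num) (by norm_num)
        hv₀V hv₀
    have huA : u ∈ A.faces := hfull u huK (h1 rfl)
    exact A.convexHull_subset_space huA hgi.1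
  · intro z hzA t
    apply Subtype.ext
    obtain ⟨u, hu, hzu⟩ := SimplicialComplex.mem_space_iff.1 hzA
    exact gmap_eq_self_of_supp (hsub hu) hzu (hSS (hsub hu)) (sWt_supp_of_spaceA hsub hzA)
end
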